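/- Let e and f be regular expressions over α with matches' e = matches' f. Then for every star-continuous Kleene algebra K and every map h : α → K, ĥ e = ĥ f. -/

import Mathlib

/-- Homomorphic extension of `h : α → K` to regular expressions. -/
def interp {α : Type*} {K : Type*} [KleeneAlgebra K] (h : α → K) :
    RegularExpression α → K
  | .zero => 0
  | .epsilon => 1
  | .char a => h a
  | .plus e f => interp h e + interp h f
  | .comp e f => interp h e * interp h f
  | .star e => KStar.kstar (interp h e)

private def hword {α K : Type*} [KleeneAlgebra K] (h : α → K) (w : List α) : K :=
  (w.map h).prod

private lemma hword_nil {α K : Type*} [KleeneAlgebra K] (h : α → K) : hword h [] = 1 := rfl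

private lemma hword_append {α K : Type*} [KleeneAlgebra K] (h : α → K) (a b : List α) :
    hword h (a ++ b) = hword h a * hword h b := by
  simp [hword]

private lemma hword_le_interp {α K : Type*} [KleeneAlgebra K] (h : α → K)
    (e : RegularExpression α) : ∀ w ∈ e.matches', hword h w ≤ interp h e := by
  induction e with
  | zero => intro w hw; exact absurd hw (by simp [RegularExpression.matches'_zero])
  | epsilon =>
    intro w hw
    simp only [RegularExpression.matches', Language.mem_one] at hw
    simp [hw, hword, interp]
  | char a =>
    intro w hw
    have hw' : w = [a] := hw
    simp [hw', hword, interp]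
  | plus e f ihe ihf =>
    intro w hw
    simp only [RegularExpression.matches', Language.mem_add] at hw
    show hword h w ≤ interp h e + interp h f
    rw [add_eq_sup]
    rcases hw with hw | hw
    · exact le_trans (ihe w hw) le_sup_left
    · exact le_trans (ihf w hw) le_sup_right
  | comp e f ihe ihf =>
    intro w hw
    simp only [RegularExpression.matches', Language.mem_mul] at hw
    obtain ⟨a, ha, b, hb, rfl⟩ := hw
    rw [hword_append]
    exact mul_le_mul' (ihe a ha) (ihf b hb)
  | star e ihe =>
    intro w hw
    simp only [RegularExpression.matches', Language.mem_kstar] at hw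
    obtain ⟨L, rfl, hL⟩ := hw
    show hword h L.flatten ≤ KStar.kstar (interp h e)
    induction L with
    | nil => simp only [List.flatten_nil, hword_nil]; exact one_le_kstar
    | cons x L ih =>
      rw [List.flatten_cons, hword_append]
      calc hword h x * hword h L.flatten
          ≤ interp h e * KStar.kstar (interp h e) :=
            mul_le_mul' (ihe x (hL x (by simp))) (ih fun y hy => hL y (by simp [hy]))
        _ ≤ KStar.kstar (interp h e) := mul_kstar_le_kstar

private lemma interp_le {α K : Type*} [KleeneAlgebra K]
    (hc : ∀ u x v y : K, (∀ n : ℕ, u * x ^ n * v ≤ y) → u * KStar.kstar x * v ≤ y)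
    (h : α → K) (y : K) (e : RegularExpression α) :
    ∀ u v : K, (∀ w ∈ e.matches', u * hword h w * v ≤ y) → u * interp h e * v ≤ y := by
  induction e with
  | zero => intro u v _; simp [interp, zero_le]
  | epsilon =>
    intro u v H
    simpa [hword_nil, interp] using H [] (Language.nil_mem_one)
  | char a =>
    intro u v H
    have := H [a] (rfl)
    simpa [hword, interp] using this
  | plus e f ihe ihf =>
    intro u v H
    have he := ihe u v fun w hw => H w (Or.inl hw)
    have hf := ihf u v fun w hw => H w (Or.inr hw)
    show u * (interp h e + interp h f) * v ≤ y
    rw [mul_add, add_mul, add_eq_sup]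
    exact sup_le he hf
  | comp e f ihe ihf =>
    intro u v H
    show u * (interp h e * interp h f) * v ≤ y
    rw [← mul_assoc, mul_assoc]
    refine ihe u (interp h f * v) fun w₁ hw₁ => ?_
    rw [← mul_assoc]
    refine ihf (u * hword h w₁) v fun w₂ hw₂ => ?_
    rw [mul_assoc u, ← hword_append]
    exact H _ (by
      exact Language.append_mem_mul hw₁ hw₂)
  | star e ihe =>
    intro u v H
    refine hc u (interp h e) v y fun n => ?_
    induction n generalizing u with
    | zero => simpa [hword_nil] using H [] (Language.nil_mem_kstar _)
    | succ n ih =>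
      rw [pow_succ', ← mul_assoc, mul_assoc]
      refine ihe u ((interp h e) ^ n * v) fun w₁ hw₁ => ?_
      rw [← mul_assoc]
      refine ih (u * hword h w₁) fun w hw => ?_
      rw [mul_assoc u, ← hword_append]
      refine H _ ?_
      simp only [RegularExpression.matches', Language.mem_kstar] at hw ⊢
      obtain ⟨L, rfl, hL⟩ := hw
      have : w₁ ++ L.flatten = (w₁ :: L).flatten := by simp
      rw [this]
      exact Language.join_mem_kstar (by
        intro z hz
        rcases List.mem_cons.mp hz with rfl | hz
        · exact hw₁
        · exact hL z hz)

/-- Language-equivalent expressions agree in every star-continuous Kleene algebra. -/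
theorem language_eq_star_continuous {α : Type*} (e f : RegularExpression α)
    (hlang : e.matches' = f.matches') :
    ∀ (K : Type*) [KleeneAlgebra K],
      (∀ u x v y : K, (∀ n : ℕ, u * x ^ n * v ≤ y) → u * KStar.kstar x * v ≤ y) →
      ∀ h : α → K, interp h e = interp h f := by
  intro K _ hc h
  have key : ∀ g g' : RegularExpression α, g.matches' = g'.matches' →
      interp h g ≤ interp h g' := by
    intro g g' hgg
    have := interp_le hc h (interp h g') g 1 1 fun w hw => by
      simpa using hword_le_interp h g' w (hgg ▸ hw)
    simpa using this
  exact le_antisymm (key e f hlang) (key f e hlang.symm)
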